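/- Let A : E → F be a closed, densely defined unbounded operator between Hilbert spaces. Then B = (A* ∘ A + Id)⁻¹ is an everywhere-defined bounded linear map from E to E with operator norm at most 1, C = A ∘ (A* ∘ A + Id)⁻¹ is an everywhere-defined bounded linear map from E to F with operator norm at most 1, and B is self-adjoint and positive. -/

import Mathlib

set_option maxHeartbeats 1000000


open LinearPMap
open scoped ComplexInnerProductSpace

/-- For a closed densely defined unbounded operator `A : E → F` between
Hilbert spaces, `B = (A† ∘ A + Id)⁻¹` is an everywhere-defined bounded operator on `E` with
`‖B‖ ≤ 1`, self-adjoint and positive, and `C = A ∘ B` is an everywhere-defined bounded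
operator from `E` to `F` with `‖C‖ ≤ 1`. -/
theorem stmt1 {E F : Type*} [NormedAddCommGroup E] [InnerProductSpace ℂ E] [CompleteSpace E]
    [NormedAddCommGroup F] [InnerProductSpace ℂ F] [CompleteSpace F]
    (A : E →ₗ.[ℂ] F) (hA : Dense (A.domain : Set E)) (hclosed : LinearPMap.IsClosed A) :
    ∃ B : E →L[ℂ] E, ∃ C : E →L[ℂ] F,
      ‖B‖ ≤ 1 ∧ ‖C‖ ≤ 1 ∧ IsSelfAdjoint B ∧ (∀ x : E, 0 ≤ Complex.re (inner ℂ (B x) x : ℂ)) ∧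
      ∀ x : E, ∃ (hx : B x ∈ A.domain) (hx' : A ⟨B x, hx⟩ ∈ A.adjoint.domain),
        C x = A ⟨B x, hx⟩ ∧
        A.adjoint ⟨A ⟨B x, hx⟩, hx'⟩ + B x = x := by
  classical
  set eL : WithLp 2 (E × F) ≃L[ℂ] E × F := WithLp.prodContinuousLinearEquiv 2 ℂ E F with heL
  set G : Submodule ℂ (WithLp 2 (E × F)) :=
    A.graph.comap (WithLp.linearEquiv 2 ℂ (E × F)).toLinearMap with hG
  have hGmem : ∀ v : WithLp 2 (E × F), v ∈ G ↔ (eL v) ∈ A.graph := fun v => Iff.rfl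
  have hGclosed : IsClosed (G : Set (WithLp 2 (E × F))) := by
    have : (G : Set (WithLp 2 (E × F))) = eL ⁻¹' (A.graph : Set (E × F)) := rfl
    rw [this]
    exact hclosed.preimage eL.continuous
  haveI : CompleteSpace G := hGclosed.completeSpace_coe
  set L : E →L[ℂ] WithLp 2 (E × F) :=
    (eL.symm : (E × F) →L[ℂ] WithLp 2 (E × F)).comp (ContinuousLinearMap.inl ℂ E F) with hL
  set Q : E →L[ℂ] E × F :=
    (eL : WithLp 2 (E × F) →L[ℂ] E × F).comp
      ((G.subtypeL.comp (G.orthogonalProjectionOnto)).comp L) with hQ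
  set B : E →L[ℂ] E := (ContinuousLinearMap.fst ℂ E F).comp Q with hB
  set C : E →L[ℂ] F := (ContinuousLinearMap.snd ℂ E F).comp Q with hC
  -- membership of graph
  have hmem : ∀ x : E, (B x, C x) ∈ A.graph := by
    intro x
    have h1 : (↑(G.orthogonalProjectionOnto (L x)) : WithLp 2 (E × F)) ∈ G :=
      (G.orthogonalProjectionOnto (L x)).2
    rw [hGmem] at h1
    have : (B x, C x) = eL (↑(G.orthogonalProjectionOnto (L x))) := rfl
    rw [this]; exact h1
  have hdom : ∀ x : E, B x ∈ A.domain := by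
    intro x
    obtain ⟨y, hy1, hy2⟩ := (A.mem_graph_iff).mp (hmem x)
    rw [show B x = (y : E) from hy1.symm]
    exact y.2
  have happ : ∀ x : E, A ⟨B x, hdom x⟩ = C x := by
    intro x
    obtain ⟨y, hy1, hy2⟩ := (A.mem_graph_iff).mp (hmem x)
    have : (⟨B x, hdom x⟩ : A.domain) = y := Subtype.ext hy1.symm
    rw [this]; exact hy2
  -- orthogonality relation
  have hperp : ∀ (x : E) (u : A.domain), ⟪x - B x, (u : E)⟫ = ⟪C x, A u⟫ := by
    intro x u
    have h1 : L x - ↑(G.orthogonalProjectionOnto (L x)) ∈ Gᗮ :=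
      Submodule.sub_starProjection_mem_orthogonal (K := G) (L x)
    have h2 : (eL.symm ((u : E), A u)) ∈ G := by
      rw [hGmem]; simp only [ContinuousLinearEquiv.apply_symm_apply]; exact A.mem_graph u
    have h3 := h1 _ h2
    rw [WithLp.prod_inner_apply] at h3
    have e1 : (L x - ↑(G.orthogonalProjectionOnto (L x))).ofLp.1 = x - B x := rfl
    have e2 : (L x - ↑(G.orthogonalProjectionOnto (L x))).ofLp.2 = 0 - C x := rfl
    have e3 : (eL.symm ((u : E), A u)).ofLp.1 = (u : E) := rfl
    have e4 : (eL.symm ((u : E), A u)).ofLp.2 = A u := rfl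
    rw [e1, e2, e3, e4, zero_sub, inner_neg_right] at h3
    have h4 : ⟪(u : E), x - B x⟫ = ⟪A u, C x⟫ := by linear_combination h3
    have h5 := congrArg (starRingEnd ℂ) h4
    rwa [inner_conj_symm, inner_conj_symm] at h5
  have hdom' : ∀ x : E, C x ∈ A.adjoint.domain := fun x =>
    mem_adjoint_domain_of_exists (T := A) (C x) ⟨x - B x, fun u => hperp x u⟩
  have hadj : ∀ x : E, A.adjoint ⟨C x, hdom' x⟩ = x - B x := fun x =>
    adjoint_apply_eq hA ⟨C x, hdom' x⟩ (fun u => hperp x u)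
  -- key identity
  have hkey : ∀ x y : E, ⟪B x, y⟫ = ⟪B x, B y⟫ + ⟪C x, C y⟫ := by
    intro x y
    have h1 : ⟪A.adjoint ⟨C y, hdom' y⟩, B x⟫ = ⟪C y, A ⟨B x, hdom x⟩⟫ :=
      adjoint_isFormalAdjoint hA ⟨C y, hdom' y⟩ ⟨B x, hdom x⟩
    rw [hadj y, happ x] at h1
    have h2 : ⟪B x, y - B y⟫ = ⟪C x, C y⟫ := by
      rw [← inner_conj_symm, h1, inner_conj_symm]
    calc ⟪B x, y⟫ = ⟪B x, B y + (y - B y)⟫ := by rw [show B y + (y - B y) = y by abel]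
      _ = ⟪B x, B y⟫ + ⟪B x, y - B y⟫ := inner_add_right _ _ _
      _ = ⟪B x, B y⟫ + ⟪C x, C y⟫ := by rw [h2]
  -- norm bounds
  have hnorm : ∀ x : E, ‖B x‖ ^ 2 + ‖C x‖ ^ 2 ≤ ‖x‖ ^ 2 := by
    intro x
    have h1 : ‖(↑(G.orthogonalProjectionOnto (L x)) : WithLp 2 (E × F))‖ ≤ ‖L x‖ := by
      calc ‖(↑(G.orthogonalProjectionOnto (L x)) : WithLp 2 (E × F))‖
          = ‖G.orthogonalProjectionOnto (L x)‖ := rfl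
        _ ≤ ‖G.orthogonalProjectionOnto‖ * ‖L x‖ := (G.orthogonalProjectionOnto).le_opNorm _
        _ ≤ 1 * ‖L x‖ := by
            exact mul_le_mul_of_nonneg_right (Submodule.orthogonalProjectionOnto_norm_le G) (norm_nonneg _)
        _ = ‖L x‖ := one_mul _
    have h2 : ‖(↑(G.orthogonalProjectionOnto (L x)) : WithLp 2 (E × F))‖ ^ 2
        = ‖B x‖ ^ 2 + ‖C x‖ ^ 2 := by
      rw [WithLp.prod_norm_sq_eq_of_L2]; rfl
    have h3 : ‖L x‖ ^ 2 = ‖x‖ ^ 2 := by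
      rw [WithLp.prod_norm_sq_eq_of_L2]
      have : (L x).fst = x := rfl
      have h0 : (L x).snd = (0 : F) := rfl
      rw [this, h0, norm_zero]; ring
    calc ‖B x‖ ^ 2 + ‖C x‖ ^ 2 = _ := h2.symm
      _ ≤ ‖L x‖ ^ 2 := by
          apply pow_le_pow_left₀ (norm_nonneg _) h1
      _ = ‖x‖ ^ 2 := h3
  have hBle : ∀ x : E, ‖B x‖ ≤ ‖x‖ := by
    intro x
    have := hnorm x
    nlinarith [norm_nonneg (B x), norm_nonneg (C x), norm_nonneg x, sq_nonneg (‖C x‖)]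
  have hCle : ∀ x : E, ‖C x‖ ≤ ‖x‖ := by
    intro x
    have := hnorm x
    nlinarith [norm_nonneg (B x), norm_nonneg (C x), norm_nonneg x]
  refine ⟨B, C, ?_, ?_, ?_, ?_, ?_⟩
  · exact B.opNorm_le_bound zero_le_one (fun x => by rw [one_mul]; exact hBle x)
  · exact C.opNorm_le_bound zero_le_one (fun x => by rw [one_mul]; exact hCle x)
  · rw [ContinuousLinearMap.isSelfAdjoint_iff_isSymmetric]
    intro x y
    show ⟪B x, y⟫ = ⟪x, B y⟫
    have h1 : ⟪x, B y⟫ = starRingEnd ℂ ⟪B y, x⟫ := (inner_conj_symm _ _).symm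
    rw [hkey x y, h1, hkey y x, _root_.map_add, inner_conj_symm, inner_conj_symm]
  · intro x
    have := hkey x x
    rw [this, Complex.add_re]
    have h1 : 0 ≤ Complex.re ⟪B x, B x⟫ := inner_self_nonneg (𝕜 := ℂ)
    have h2 : 0 ≤ Complex.re ⟪C x, C x⟫ := inner_self_nonneg (𝕜 := ℂ)
    linarith
  · intro x
    refine ⟨hdom x, (happ x) ▸ hdom' x, (happ x).symm, ?_⟩
    have h1 : (⟨A ⟨B x, hdom x⟩, (happ x) ▸ hdom' x⟩ : A.adjoint.domain)
        = ⟨C x, hdom' x⟩ := Subtype.ext (happ x)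
    rw [h1, hadj x]
    abel
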